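/- For every β > 0 and every axis-parallel half-open rectangle Δ = [a, b) × [c, d) in ℝ²: if the area (b − a)(d − c) ≥ β²(2 + α), then Δ contains at least one point of the scaled lattice βΓ; and if the area (b − a)(d − c) ≤ β²/(3 + 2α), then Δ contains at most one point of βΓ. -/

import Mathlib

open Set

/-- The inverse golden ratio `α = (√5 - 1)/2`. -/
noncomputable def invGolden : ℝ := (Real.sqrt 5 - 1) / 2

/-- The rotated lattice `Γ = Aℤ²`, where `A` has rows `(1, -α)` and `(α, 1)`,
i.e. `A(n,m)ᵀ = (n - αm, αn + m)ᵀ`. -/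
def Γ : Set (ℝ × ℝ) :=
  {p | ∃ n m : ℤ, p = ((n : ℝ) - invGolden * m, invGolden * n + m)}

/-- The scaled lattice `βΓ = {βγ : γ ∈ Γ}`. -/
def scaledLattice (β : ℝ) : Set (ℝ × ℝ) := (fun γ : ℝ × ℝ => β • γ) '' Γ

lemma sqrt5_sq : Real.sqrt 5 ^ 2 = 5 := Real.sq_sqrt (by norm_num)

lemma alpha_pos : 0 < invGolden := by
  have h := sqrt5_sq; have h0 : 0 ≤ Real.sqrt 5 := Real.sqrt_nonneg 5
  unfold invGolden; nlinarith

lemma alpha_sq : invGolden ^ 2 = 1 - invGolden := by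
  have h := sqrt5_sq; unfold invGolden; nlinarith

lemma alpha_ne : invGolden ≠ 0 := ne_of_gt alpha_pos
lemma phi_pos : (0 : ℝ) < 1 + invGolden := by linarith [alpha_pos]
lemma phi_ne : (1 + invGolden) ≠ 0 := ne_of_gt phi_pos

/-- lower bound for the norm form of the golden lattice -/
lemma norm_lb (n m : ℤ) (h : ¬(n = 0 ∧ m = 0)) :
    invGolden ≤ |((n : ℝ) - invGolden * m) * (invGolden * n + m)| := by
  have key : ((n : ℝ) - invGolden * m) * (invGolden * n + m)
      = invGolden * ((n : ℝ) ^ 2 + n * m - m ^ 2) := by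
    linear_combination (-((n : ℝ) * m)) * alpha_sq
  have hZ : n ^ 2 + n * m - m ^ 2 ≠ 0 := by
    intro h0
    have h5 : (2 * n + m) ^ 2 = 5 * m ^ 2 := by linear_combination 4 * h0
    by_cases hm : m = 0
    · subst hm
      have hn : n = 0 := by nlinarith
      exact h ⟨hn, rfl⟩
    · have hirr : Irrational (Real.sqrt 5) :=
        (by norm_num : Nat.Prime 5).irrational_sqrt
      set q : ℚ := (2 * n + m) / m with hq_def
      have hmQ : (m : ℚ) ≠ 0 := Int.cast_ne_zero.mpr hm
      have hq : q ^ 2 = 5 := by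
        rw [hq_def, div_pow]
        rw [div_eq_iff (by positivity)]
        exact_mod_cast h5
      have h52 : ((|q| : ℚ) : ℝ) ^ 2 = 5 := by
        push_cast
        rw [← abs_pow]
        rw [show ((q : ℝ)) ^ 2 = ((q ^ 2 : ℚ) : ℝ) by push_cast; ring, hq]
        norm_num
      have heq : Real.sqrt 5 = ((|q| : ℚ) : ℝ) := by
        rw [← h52, Real.sqrt_sq (by positivity)]
      rw [heq] at hirr
      exact Rat.not_irrational _ hirr
  have h1 : (1 : ℝ) ≤ |((n : ℝ) ^ 2 + n * m - m ^ 2)| := by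
    have hcast : ((n ^ 2 + n * m - m ^ 2 : ℤ) : ℝ) = (n : ℝ) ^ 2 + n * m - m ^ 2 := by
      push_cast; ring
    rw [← hcast, ← Int.cast_abs]
    exact_mod_cast Int.one_le_abs hZ
  rw [key, abs_mul, abs_of_pos alpha_pos]
  exact le_mul_of_one_le_right (le_of_lt alpha_pos) h1

/-- x-coordinate of the k-th short lattice vector. -/
noncomputable def Xc (k : ℤ) : ℝ := (-1 : ℝ) ^ (k + 1) * invGolden ^ (k + 1)
/-- y-coordinate of the k-th short lattice vector. -/
noncomputable def Yc (k : ℤ) : ℝ := (1 + invGolden) ^ k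

lemma neg_one_ne : (-1 : ℝ) ≠ 0 := by norm_num

lemma keyA (k : ℤ) : Xc (k + 1) - Xc k = (-1 : ℝ) ^ k * invGolden ^ k := by
  unfold Xc
  simp only [zpow_add_one₀ neg_one_ne, zpow_add_one₀ alpha_ne]
  linear_combination ((-1 : ℝ) ^ k * invGolden ^ k) * alpha_sq

lemma keyB (k : ℤ) : Xc (k + 1) - 2 * Xc k = (-1 : ℝ) ^ k * invGolden ^ k * (1 + invGolden) := by
  unfold Xc
  simp only [zpow_add_one₀ neg_one_ne, zpow_add_one₀ alpha_ne]
  linear_combination ((-1 : ℝ) ^ k * invGolden ^ k) * alpha_sq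

lemma Xc_rec (k : ℤ) : Xc k + Xc (k + 1) = Xc (k + 2) := by
  unfold Xc
  have e1 : k + 2 + 1 = k + 1 + 1 + 1 := by ring
  rw [e1]
  simp only [zpow_add_one₀ neg_one_ne, zpow_add_one₀ alpha_ne]
  linear_combination ((-1 : ℝ) ^ k * invGolden ^ k * invGolden) * alpha_sq

lemma Yc_rec (k : ℤ) : Yc k + Yc (k + 1) = Yc (k + 2) := by
  unfold Yc
  have e1 : k + 2 = k + 1 + 1 := by ring
  rw [e1]
  simp only [zpow_add_one₀ phi_ne]
  linear_combination (-(1 + invGolden) ^ k) * alpha_sq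

lemma Yc_pos (k : ℤ) : 0 < Yc k := zpow_pos phi_pos k

/-- existence of integer preimages for consecutive short lattice vectors -/
def GoldenPred (k : ℤ) : Prop :=
  ∃ n m nn mm : ℤ,
    ((n : ℝ) - invGolden * m = Xc k) ∧ (invGolden * n + m = Yc k) ∧
    ((nn : ℝ) - invGolden * mm = Xc (k + 1)) ∧ (invGolden * nn + mm = Yc (k + 1))

lemma pred_zero : GoldenPred 0 := by
  refine ⟨0, 1, 1, 1, ?_, ?_, ?_, ?_⟩
  · simp only [Xc, Yc]; push_cast; norm_num
    try ring
  · simp only [Xc, Yc]; push_cast; norm_num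
    try ring
  · simp only [Xc, Yc]; push_cast; norm_num [zpow_two]
    linear_combination -alpha_sq
  · simp only [Xc, Yc]; push_cast; norm_num
    try ring

lemma pred_up (k : ℤ) (h : GoldenPred k) : GoldenPred (k + 1) := by
  obtain ⟨n, m, nn, mm, A1, A2, B1, B2⟩ := h
  have e : k + 1 + 1 = k + 2 := by ring
  refine ⟨nn, mm, n + nn, m + mm, B1, B2, ?_, ?_⟩
  · rw [e]
    have := Xc_rec k
    push_cast
    linear_combination A1 + B1 + this
  · rw [e]
    have := Yc_rec k
    push_cast
    linear_combination A2 + B2 + this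

lemma pred_down (k : ℤ) (h : GoldenPred k) : GoldenPred (k - 1) := by
  obtain ⟨n, m, nn, mm, A1, A2, B1, B2⟩ := h
  have e1 : k - 1 + 1 = k := by ring
  rw [GoldenPred, e1]
  refine ⟨nn - n, mm - m, n, m, ?_, ?_, A1, A2⟩
  · have hr := Xc_rec (k - 1)
    have e2 : k - 1 + 2 = k + 1 := by ring
    rw [e1, e2] at hr
    push_cast
    linear_combination B1 - A1 - hr
  · have hr := Yc_rec (k - 1)
    have e2 : k - 1 + 2 = k + 1 := by ring
    rw [e1, e2] at hr
    push_cast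
    linear_combination B2 - A2 - hr

lemma unit_mem (k : ℤ) : GoldenPred k := by
  induction k using Int.induction_on with
  | zero => exact pred_zero
  | succ i ih => exact pred_up i ih
  | pred i ih => exact pred_down (-i) ih

/-- The core covering lemma: walking through the lattice generated by `e` and `f`,
adjusting the second coordinate into `[c, c + f2)` at each step, the first coordinates
march forward in steps of bounded size, hence hit `[a, b)`. -/
lemma KL (a b c d e1 e2 f1 f2 : ℝ) (j : ℤ)
    (hmem : ∀ s t : ℤ, ((s : ℝ) * e1 + t * f1, (s : ℝ) * e2 + t * f2) ∈ Γ)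
    (hf2 : 0 < f2) (hf2d : f2 ≤ d - c)
    (hj1 : (j : ℝ) * f2 < e2) (hj2 : e2 < ((j : ℝ) + 1) * f2)
    (hv1 : 0 < e1 - ((j : ℝ) + 1) * f1) (hv1' : e1 - ((j : ℝ) + 1) * f1 ≤ b - a)
    (hv2 : 0 < e1 - (j : ℝ) * f1) (hv2' : e1 - (j : ℝ) * f1 ≤ b - a) :
    ∃ p ∈ Γ, p.1 ∈ Ico a b ∧ p.2 ∈ Ico c d := by
  set t : ℤ → ℤ := fun s => ⌈(c - s * e2) / f2⌉ with ht
  set x : ℤ → ℝ := fun s => (s : ℝ) * e1 + (t s : ℝ) * f1 with hx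
  set y : ℤ → ℝ := fun s => (s : ℝ) * e2 + (t s : ℝ) * f2 with hy
  have htlb : ∀ s : ℤ, (c - (s : ℝ) * e2) / f2 ≤ (t s : ℝ) := fun s => Int.le_ceil _
  have htub : ∀ s : ℤ, (t s : ℝ) < (c - (s : ℝ) * e2) / f2 + 1 := fun s => Int.ceil_lt_add_one _
  have hyc : ∀ s : ℤ, c ≤ y s := by
    intro s
    have h1 := htlb s
    rw [div_le_iff₀ hf2] at h1
    simp only [hy]
    nlinarith [hf2]
  have hyd : ∀ s : ℤ, y s < c + f2 := by
    intro s
    have h1 := htub s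
    have h2 : (t s : ℝ) * f2 < ((c - (s : ℝ) * e2) / f2 + 1) * f2 :=
      mul_lt_mul_of_pos_right h1 hf2
    rw [add_mul, div_mul_cancel₀ _ (ne_of_gt hf2)] at h2
    simp only [hy]
    linarith
  have hΔ : ∀ s : ℤ, t (s + 1) = t s - (j + 1) ∨ t (s + 1) = t s - j := by
    intro s
    have key : (c - ((s : ℝ) + 1) * e2) / f2 = (c - (s : ℝ) * e2) / f2 - e2 / f2 := by
      field_simp
      ring
    have hub : t (s + 1) ≤ t s - j := by
      have h1 : (c - ((s : ℝ) + 1) * e2) / f2 ≤ (c - (s : ℝ) * e2) / f2 - (j : ℝ) := by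
        rw [key]
        have : (j : ℝ) ≤ e2 / f2 := le_of_lt ((lt_div_iff₀ hf2).mpr hj1)
        linarith
      calc t (s + 1) = ⌈(c - ((s : ℝ) + 1) * e2) / f2⌉ := by simp [ht]
        _ ≤ ⌈(c - (s : ℝ) * e2) / f2 - (j : ℝ)⌉ := Int.ceil_le_ceil h1
        _ = t s - j := by rw [Int.ceil_sub_intCast]
    have hlb : t s - (j + 1) ≤ t (s + 1) := by
      have h1 : (c - (s : ℝ) * e2) / f2 - ((j : ℝ) + 1) ≤ (c - ((s : ℝ) + 1) * e2) / f2 := by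
        rw [key]
        have : e2 / f2 ≤ (j : ℝ) + 1 := le_of_lt ((div_lt_iff₀ hf2).mpr (by linarith))
        linarith
      calc t s - (j + 1) = ⌈(c - (s : ℝ) * e2) / f2 - ((j : ℝ) + 1)⌉ := by
            rw [show ((j : ℝ) + 1) = (((j + 1 : ℤ) : ℝ)) by push_cast; ring, Int.ceil_sub_intCast]
        _ ≤ ⌈(c - ((s : ℝ) + 1) * e2) / f2⌉ := Int.ceil_le_ceil h1
        _ = t (s + 1) := by simp [ht]
    omega
  have hstep : ∀ s : ℤ, x (s + 1) - x s = e1 - ((j : ℝ) + 1) * f1 ∨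
      x (s + 1) - x s = e1 - (j : ℝ) * f1 := by
    intro s
    rcases hΔ s with h | h
    · left
      simp only [hx, h]
      push_cast
      ring
    · right
      simp only [hx, h]
      push_cast
      ring
  have hsteppos : ∀ s : ℤ, 0 < x (s + 1) - x s ∧ x (s + 1) - x s ≤ b - a := by
    intro s
    rcases hstep s with h | h <;> rw [h] <;> exact ⟨by linarith, by linarith⟩
  set σ : ℝ := e1 - e2 / f2 * f1 with hσdef
  set C : ℝ := c / f2 * f1 with hC
  have hσ : 0 < σ := by
    rcases le_or_gt 0 f1 with h | h
    · have : e2 / f2 * f1 ≤ ((j : ℝ) + 1) * f1 :=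
        mul_le_mul_of_nonneg_right (le_of_lt ((div_lt_iff₀ hf2).mpr (by linarith))) h
      simp only [hσdef]; linarith
    · have : e2 / f2 * f1 ≤ (j : ℝ) * f1 := by
        have h2 : (j : ℝ) < e2 / f2 := (lt_div_iff₀ hf2).mpr hj1
        nlinarith
      simp only [hσdef]; linarith
  have hbracket : ∀ s : ℤ, (s : ℝ) * σ + C - |f1| ≤ x s ∧ x s ≤ (s : ℝ) * σ + C + |f1| := by
    intro s
    have hdiff : x s - ((s : ℝ) * σ + C) = ((t s : ℝ) - (c - (s : ℝ) * e2) / f2) * f1 := by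
      simp only [hx, hσdef, hC]
      field_simp
      ring
    have h1 : |x s - ((s : ℝ) * σ + C)| ≤ |f1| := by
      rw [hdiff, abs_mul]
      have h2 : |(t s : ℝ) - (c - (s : ℝ) * e2) / f2| ≤ 1 :=
        abs_le.mpr ⟨by linarith [htlb s], by linarith [htub s]⟩
      calc |(t s : ℝ) - (c - (s : ℝ) * e2) / f2| * |f1| ≤ 1 * |f1| :=
            mul_le_mul_of_nonneg_right h2 (abs_nonneg _)
        _ = |f1| := one_mul _
    have := abs_le.mp h1
    constructor <;> linarith [this.1, this.2]
  have hinh : ∃ s : ℤ, x s < a := by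
    obtain ⟨s, hs⟩ := exists_int_lt ((a - C - |f1|) / σ)
    refine ⟨s, ?_⟩
    have h1 := (hbracket s).2
    have h2 : (s : ℝ) * σ < a - C - |f1| := by
      have := mul_lt_mul_of_pos_right hs hσ
      rwa [div_mul_cancel₀ _ (ne_of_gt hσ)] at this
    linarith
  have hbdd : ∃ B : ℤ, ∀ z : ℤ, x z < a → z ≤ B := by
    refine ⟨⌈(a - C + |f1|) / σ⌉, fun z hz => ?_⟩
    have h1 := (hbracket z).1
    have h2 : (z : ℝ) * σ < a - C + |f1| := by linarith
    have h3 : (z : ℝ) < (a - C + |f1|) / σ := (lt_div_iff₀ hσ).mpr h2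
    have h4 : (z : ℝ) ≤ (⌈(a - C + |f1|) / σ⌉ : ℝ) := le_trans (le_of_lt h3) (Int.le_ceil _)
    exact_mod_cast h4
  obtain ⟨S, hS1, hS2⟩ := Int.exists_greatest_of_bdd hbdd hinh
  have h1 : a ≤ x (S + 1) := by
    by_contra h
    have := hS2 (S + 1) (lt_of_not_ge h)
    omega
  have h2 : x (S + 1) < b := by
    have := (hsteppos S).2
    linarith
  refine ⟨(x (S + 1), y (S + 1)), hmem (S + 1) (t (S + 1)), ⟨h1, h2⟩, hyc _,
    lt_of_lt_of_le (hyd _) (by linarith)⟩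

lemma alpha_zpow_pos (k : ℤ) : 0 < invGolden ^ k := zpow_pos alpha_pos k

/-- any half-open rectangle of area at least `2 + α` contains a point of `Γ` -/
lemma exists_in_rect (a b c d : ℝ) (hab : a < b) (hcd : c < d)
    (h : 2 + invGolden ≤ (b - a) * (d - c)) :
    ∃ p ∈ Γ, p.1 ∈ Ico a b ∧ p.2 ∈ Ico c d := by
  obtain ⟨k, hk1, hk2⟩ := exists_mem_Ico_zpow (by linarith : (0 : ℝ) < d - c)
    (by linarith [alpha_pos] : (1 : ℝ) < 1 + invGolden)
  obtain ⟨n, m, nn, mm, A1, A2, B1, B2⟩ := unit_mem k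
  have hαk : 0 < invGolden ^ k := alpha_zpow_pos k
  have hab' : 0 < b - a := by linarith
  have hpow : 0 < (1 + invGolden) ^ (k + 1) := zpow_pos phi_pos _
  have hkey : invGolden ^ k * (1 + invGolden) * (1 + invGolden) ^ (k + 1) = 2 + invGolden := by
    have h1 : invGolden ^ k * (1 + invGolden) ^ k = 1 := by
      rw [← mul_zpow, show invGolden * (1 + invGolden) = 1 by nlinarith [alpha_sq], one_zpow]
    rw [zpow_add_one₀ phi_ne]
    calc invGolden ^ k * (1 + invGolden) * ((1 + invGolden) ^ k * (1 + invGolden))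
        = (invGolden ^ k * (1 + invGolden) ^ k) * ((1 + invGolden) * (1 + invGolden)) := by ring
      _ = (1 + invGolden) * (1 + invGolden) := by rw [h1, one_mul]
      _ = 2 + invGolden := by nlinarith [alpha_sq]
  have hw : invGolden ^ k * (1 + invGolden) < b - a := by
    have h2 : invGolden ^ k * (1 + invGolden) * (1 + invGolden) ^ (k + 1)
        < (b - a) * (1 + invGolden) ^ (k + 1) := by
      rw [hkey]
      calc (2 : ℝ) + invGolden ≤ (b - a) * (d - c) := h
        _ < (b - a) * (1 + invGolden) ^ (k + 1) := mul_lt_mul_of_pos_left hk2 hab'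
    exact lt_of_mul_lt_mul_right h2 (le_of_lt hpow)
  have hw2 : invGolden ^ k < b - a := by nlinarith [alpha_pos, hαk]
  have hYeq : Yc (k + 1) = (1 + invGolden) * Yc k := by
    rw [Yc, Yc, zpow_add_one₀ phi_ne]; ring
  have hYrel1 : Yc k < Yc (k + 1) := by nlinarith [Yc_pos k, alpha_pos]
  have hYrel2 : Yc (k + 1) < 2 * Yc k := by
    have := Yc_pos k
    have ha1 : invGolden < 1 := by nlinarith [alpha_sq, alpha_pos]
    nlinarith
  rcases Int.even_or_odd k with ⟨l, hl⟩ | ⟨l, hl⟩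
  · -- even case : (-1)^k = 1
    have hsgn : (-1 : ℝ) ^ k = 1 := by
      rw [hl, zpow_add₀ (by norm_num : (-1:ℝ) ≠ 0), ← mul_zpow]
      norm_num
    have hA := keyA k; rw [hsgn, one_mul] at hA
    have hB := keyB k; rw [hsgn, one_mul] at hB
    refine KL a b c d (Xc (k+1)) (Yc (k+1)) (Xc k) (Yc k) 1 ?_ (Yc_pos k) hk1 ?_ ?_ ?_ ?_ ?_ ?_
    · intro s u
      refine ⟨s * nn + u * n, s * mm + u * m, ?_⟩
      have e1 : ((s * nn + u * n : ℤ) : ℝ) - invGolden * ((s * mm + u * m : ℤ) : ℝ)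
          = (s : ℝ) * Xc (k+1) + (u : ℝ) * Xc k := by
        push_cast
        linear_combination (s : ℝ) * B1 + (u : ℝ) * A1
      have e2 : invGolden * ((s * nn + u * n : ℤ) : ℝ) + ((s * mm + u * m : ℤ) : ℝ)
          = (s : ℝ) * Yc (k+1) + (u : ℝ) * Yc k := by
        push_cast
        linear_combination (s : ℝ) * B2 + (u : ℝ) * A2
      rw [Prod.ext_iff]
      exact ⟨e1.symm, e2.symm⟩
    · push_cast; linarith
    · push_cast; linarith
    · push_cast
      have h4 : Xc (k+1) - (1+1) * Xc k = Xc (k+1) - 2 * Xc k := by ring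
      rw [h4, hB]
      exact mul_pos hαk phi_pos
    · push_cast
      have h4 : Xc (k+1) - (1+1) * Xc k = Xc (k+1) - 2 * Xc k := by ring
      rw [h4, hB]; linarith
    · push_cast
      have h4 : Xc (k+1) - 1 * Xc k = Xc (k+1) - Xc k := by ring
      rw [h4, hA]; exact hαk
    · push_cast
      have h4 : Xc (k+1) - 1 * Xc k = Xc (k+1) - Xc k := by ring
      rw [h4, hA]; linarith
  · -- odd case : (-1)^k = -1
    have hsgn : (-1 : ℝ) ^ k = -1 := by
      rw [hl, zpow_add_one₀ (by norm_num : (-1:ℝ) ≠ 0), show (2*l : ℤ) = l + l by ring,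
        zpow_add₀ (by norm_num : (-1:ℝ) ≠ 0), ← mul_zpow]
      norm_num
    have hA := keyA k; rw [hsgn] at hA
    have hB := keyB k; rw [hsgn] at hB
    refine KL a b c d (-Xc (k+1)) (-Yc (k+1)) (Xc k) (Yc k) (-2) ?_ (Yc_pos k) hk1 ?_ ?_ ?_ ?_ ?_ ?_
    · intro s u
      refine ⟨s * (-nn) + u * n, s * (-mm) + u * m, ?_⟩
      have e1 : ((s * (-nn) + u * n : ℤ) : ℝ) - invGolden * ((s * (-mm) + u * m : ℤ) : ℝ)
          = (s : ℝ) * (-Xc (k+1)) + (u : ℝ) * Xc k := by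
        push_cast
        linear_combination (-(s : ℝ)) * B1 + (u : ℝ) * A1
      have e2 : invGolden * ((s * (-nn) + u * n : ℤ) : ℝ) + ((s * (-mm) + u * m : ℤ) : ℝ)
          = (s : ℝ) * (-Yc (k+1)) + (u : ℝ) * Yc k := by
        push_cast
        linear_combination (-(s : ℝ)) * B2 + (u : ℝ) * A2
      rw [Prod.ext_iff]
      exact ⟨e1.symm, e2.symm⟩
    · push_cast; linarith
    · push_cast; linarith
    · push_cast
      have h4 : -Xc (k+1) - (-2+1) * Xc k = -(Xc (k+1) - Xc k) := by ring
      rw [h4, hA]; simpa using hαk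
    · push_cast
      have h4 : -Xc (k+1) - (-2+1) * Xc k = -(Xc (k+1) - Xc k) := by ring
      rw [h4, hA]
      have h5 : -(-1 * (invGolden ^ k)) = invGolden ^ k := by ring
      rw [h5]; linarith
    · push_cast
      have h4 : -Xc (k+1) - (-2) * Xc k = -(Xc (k+1) - 2 * Xc k) := by ring
      rw [h4, hB]
      have h5 : -(-1 * (invGolden ^ k) * (1 + invGolden)) = invGolden ^ k * (1 + invGolden) := by
        ring
      rw [h5]
      exact mul_pos hαk phi_pos
    · push_cast
      have h4 : -Xc (k+1) - (-2) * Xc k = -(Xc (k+1) - 2 * Xc k) := by ring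
      rw [h4, hB]
      have h5 : -(-1 * (invGolden ^ k) * (1 + invGolden)) = invGolden ^ k * (1 + invGolden) := by
        ring
      rw [h5]; linarith

/-- For every `β > 0` and every axis-parallel half-open rectangle
`Δ = [a,b) × [c,d)`: if the area is at least `β²(2 + α)`, then `Δ` contains at
least one point of `βΓ`; and if the area is at most `β²/(3 + 2α)`, then `Δ`
contains at most one point of `βΓ`. -/
theorem scaled_lattice_point_counts (β : ℝ) (hβ : 0 < β) (a b c d : ℝ)
    (hab : a < b) (hcd : c < d) :
    (β ^ 2 * (2 + invGolden) ≤ (b - a) * (d - c) →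
      1 ≤ ((Ico a b ×ˢ Ico c d) ∩ scaledLattice β).encard) ∧
    ((b - a) * (d - c) ≤ β ^ 2 / (3 + 2 * invGolden) →
      ((Ico a b ×ˢ Ico c d) ∩ scaledLattice β).encard ≤ 1) := by
  have hβ2 : (0 : ℝ) < β ^ 2 := by positivity
  constructor
  · -- at least one point
    intro hA
    rw [Set.one_le_encard_iff_nonempty]
    have hab' : a / β < b / β := by
      apply div_lt_div_of_pos_right hab hβ
    have hcd' : c / β < d / β := div_lt_div_of_pos_right hcd hβ
    have harea : 2 + invGolden ≤ (b / β - a / β) * (d / β - c / β) := by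
      have e : (b / β - a / β) * (d / β - c / β) = ((b - a) * (d - c)) / β ^ 2 := by
        rw [← sub_div, ← sub_div, div_mul_div_comm, sq]
      rw [e, le_div_iff₀ hβ2]
      nlinarith [hA]
    obtain ⟨p, hpΓ, hp1, hp2⟩ := exists_in_rect _ _ _ _ hab' hcd' harea
    refine ⟨β • p, ⟨?_, p, hpΓ, rfl⟩⟩
    rw [Set.mem_prod]
    obtain ⟨hp1a, hp1b⟩ := hp1
    obtain ⟨hp2a, hp2b⟩ := hp2
    constructor
    · constructor
      · show a ≤ β * p.1
        rw [div_le_iff₀ hβ] at hp1a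
        linarith [hp1a]
      · show β * p.1 < b
        rw [lt_div_iff₀ hβ] at hp1b
        linarith [hp1b]
    · constructor
      · show c ≤ β * p.2
        rw [div_le_iff₀ hβ] at hp2a
        linarith [hp2a]
      · show β * p.2 < d
        rw [lt_div_iff₀ hβ] at hp2b
        linarith [hp2b]
  · -- at most one point
    intro hA
    rw [Set.encard_le_one_iff]
    rintro p q ⟨hpbox, P, ⟨n1, m1, rfl⟩, rfl⟩ ⟨hqbox, Q, ⟨n2, m2, rfl⟩, rfl⟩
    rw [Set.mem_prod] at hpbox hqbox
    obtain ⟨⟨hpa, hpb⟩, ⟨hpc, hpd⟩⟩ := hpbox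
    obtain ⟨⟨hqa, hqb⟩, ⟨hqc, hqd⟩⟩ := hqbox
    by_cases hnm : n1 = n2 ∧ m1 = m2
    · obtain ⟨h1, h2⟩ := hnm
      subst h1; subst h2; rfl
    · exfalso
      have hne : ¬(n1 - n2 = 0 ∧ m1 - m2 = 0) := by omega
      have hnorm := norm_lb (n1 - n2) (m1 - m2) hne
      set X : ℝ := ((n1 - n2 : ℤ) : ℝ) - invGolden * ((m1 - m2 : ℤ) : ℝ) with hX
      set Y : ℝ := invGolden * ((n1 - n2 : ℤ) : ℝ) + ((m1 - m2 : ℤ) : ℝ) with hY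
      -- coordinate bounds
      have hxb : β * |X| < b - a := by
        have e : β * X = (β * ((n1 : ℝ) - invGolden * m1)) - (β * ((n2 : ℝ) - invGolden * m2)) := by
          rw [hX]; push_cast; ring
        have h1 : |β * X| < b - a := by
          rw [e, abs_sub_lt_iff]
          constructor
          · simp only [Prod.smul_fst, smul_eq_mul] at hpa hpb hqa hqb
            linarith
          · simp only [Prod.smul_fst, smul_eq_mul] at hpa hpb hqa hqb
            linarith
        rwa [abs_mul, abs_of_pos hβ] at h1
      have hyb : β * |Y| < d - c := by
        have e : β * Y = (β * (invGolden * n1 + m1)) - (β * (invGolden * n2 + m2)) := by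
          rw [hY]; push_cast; ring
        have h1 : |β * Y| < d - c := by
          rw [e, abs_sub_lt_iff]
          constructor
          · simp only [Prod.smul_snd, smul_eq_mul] at hpc hpd hqc hqd
            linarith
          · simp only [Prod.smul_snd, smul_eq_mul] at hpc hpd hqc hqd
            linarith
        rwa [abs_mul, abs_of_pos hβ] at h1
      have h3 : (0 : ℝ) < 3 + 2 * invGolden := by linarith [alpha_pos]
      have hprod : β ^ 2 * (|X| * |Y|) < β ^ 2 * (1 / (3 + 2 * invGolden)) := by
        calc β ^ 2 * (|X| * |Y|) = (β * |X|) * (β * |Y|) := by ring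
          _ < (b - a) * (d - c) := by
              apply mul_lt_mul'' hxb hyb (by positivity) (by positivity)
          _ ≤ β ^ 2 / (3 + 2 * invGolden) := hA
          _ = β ^ 2 * (1 / (3 + 2 * invGolden)) := by ring
      have h4 : |X| * |Y| < 1 / (3 + 2 * invGolden) :=
        lt_of_mul_lt_mul_left hprod (le_of_lt hβ2)
      have h5 : (1 : ℝ) / (3 + 2 * invGolden) < invGolden := by
        rw [div_lt_iff₀ h3]
        nlinarith [alpha_sq, alpha_pos]
      have h6 : invGolden ≤ |X| * |Y| := by
        rw [← abs_mul]
        exact hnorm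
      linarith
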